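/- Under the stationary two-sequence k-mer model, for any position i ∈ {1,…,n−k+1} and any word W = w₁…w_k ∈ [L]^k, with Z_i^W = X_{1,i}^W − X_{2,i}^W (the difference of the indicators that W occurs in S₁, respectively S₂, starting at position i), one has Var[ Z_i^W ] = E[ (Z_i^W)² ] = π^W·( 2 − ∏_{j=1}^k M(w_j, w_j) − ∏_{j=1}^k N(w_j, w_j) ), where N = diag(π)^{-1} (diag(π) M)^T. -/

import Mathlib

open Finset

/-- Product over all of `Fin n` of factors that are `1` outside a window of
length `k` starting at `i` equals the product over the window. -/
lemma kmer_window_prod {n k : ℕ} (hkn : k ≤ n) (i : Fin (n - k + 1))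
    (D : Fin n → ℝ) (G : Fin k → ℝ)
    (h1 : ∀ m : Fin n, ¬ (i.1 ≤ m.1 ∧ m.1 < i.1 + k) → D m = 1)
    (h2 : ∀ j : Fin k, D ⟨i.1 + j.1, by have := i.2; have := j.2; omega⟩ = G j) :
    ∏ m, D m = ∏ j, G j := by
  classical
  have hi := i.2
  set e : Fin k ↪ Fin n :=
    ⟨fun j => ⟨i.1 + j.1, by have := j.2; omega⟩, by
      intro a b hab
      apply Fin.ext
      have h := congrArg Fin.val hab
      simp at h
      omega⟩ with he
  have key : ∏ m ∈ Finset.univ.map e, D m = ∏ j, G j := by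
    rw [Finset.prod_map]
    exact Finset.prod_congr rfl fun j _ => h2 j
  rw [← key]
  symm
  apply Finset.prod_subset (Finset.subset_univ _)
  intro m _ hm
  apply h1
  intro hcond
  apply hm
  simp only [Finset.mem_map, Finset.mem_univ, true_and]
  refine ⟨⟨m.1 - i.1, by omega⟩, ?_⟩
  apply Fin.ext
  simp [he]
  show i.1 + (m.1 - i.1) = m.1
  omega

/-- Expectation of a product of per-site functions over a window factorizes. -/
lemma kmer_expect {L n k : ℕ} (hkn : k ≤ n) (i : Fin (n - k + 1))
    (π : Fin L → ℝ) (M : Matrix (Fin L) (Fin L) ℝ)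
    (hmass : ∑ x : Fin L × Fin L, π x.1 * M x.1 x.2 = 1)
    (G : Fin k → Fin L × Fin L → ℝ) :
    ∑ ω : Fin n → Fin L × Fin L, (∏ m, π (ω m).1 * M (ω m).1 (ω m).2)
        * ∏ j : Fin k, G j (ω ⟨i.1 + j.1, by have := i.2; have := j.2; omega⟩)
      = ∏ j, ∑ x : Fin L × Fin L, π x.1 * M x.1 x.2 * G j x := by
  classical
  set F : Fin n → Fin L × Fin L → ℝ := fun m x =>
    π x.1 * M x.1 x.2 *
      (if h : i.1 ≤ m.1 ∧ m.1 < i.1 + k then G ⟨m.1 - i.1, by omega⟩ x else 1)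
    with hF
  have step1 : ∀ ω : Fin n → Fin L × Fin L,
      (∏ m, π (ω m).1 * M (ω m).1 (ω m).2)
        * ∏ j : Fin k, G j (ω ⟨i.1 + j.1, by have := i.2; have := j.2; omega⟩)
      = ∏ m, F m (ω m) := by
    intro ω
    rw [hF]
    simp only
    symm
    rw [Finset.prod_mul_distrib]
    congr 1
    apply kmer_window_prod hkn i
    · intro m hm; rw [dif_neg hm]
    · intro j
      have hc : i.1 ≤ i.1 + j.1 ∧ i.1 + j.1 < i.1 + k :=
        ⟨Nat.le_add_right _ _, by have := j.2; omega⟩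
      rw [dif_pos hc]
      congr 1
      apply Fin.ext
      simp
  have step2 : ∑ ω : Fin n → Fin L × Fin L, ∏ m, F m (ω m)
      = ∏ m, ∑ x, F m x := (Fintype.prod_sum F).symm
  have step3 : ∏ m, (∑ x, F m x)
      = ∏ j, ∑ x : Fin L × Fin L, π x.1 * M x.1 x.2 * G j x := by
    apply kmer_window_prod hkn i
    · intro m hm
      simp only [hF, dif_neg hm, mul_one]
      exact hmass
    · intro j
      have hc : i.1 ≤ i.1 + j.1 ∧ i.1 + j.1 < i.1 + k :=
        ⟨Nat.le_add_right _ _, by have := j.2; omega⟩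
      apply Finset.sum_congr rfl
      intro x _
      simp only [hF, dif_pos hc]
      congr 2
      apply Fin.ext
      simp
  calc ∑ ω : Fin n → Fin L × Fin L, (∏ m, π (ω m).1 * M (ω m).1 (ω m).2)
        * ∏ j : Fin k, G j (ω ⟨i.1 + j.1, by have := i.2; have := j.2; omega⟩)
      = ∑ ω : Fin n → Fin L × Fin L, ∏ m, F m (ω m) :=
        Finset.sum_congr rfl fun ω _ => step1 ω
    _ = ∏ m, ∑ x, F m x := step2
    _ = _ := step3

theorem kmer_single_position_variance
    (L k n : ℕ) (hL : 1 ≤ L) (hk : 1 ≤ k) (hkn : k ≤ n)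
    (M : Matrix (Fin L) (Fin L) ℝ)
    (hM0 : ∀ w u, 0 ≤ M w u)
    (hM1 : ∀ w, ∑ u, M w u = 1)
    (π : Fin L → ℝ)
    (hπ0 : ∀ w, 0 < π w)
    (hπ1 : ∑ w, π w = 1)
    (hstat : ∀ u, ∑ w, π w * M w u = π u)
    (N : Matrix (Fin L) (Fin L) ℝ)
    (hN : N = (Matrix.diagonal π)⁻¹ * (Matrix.diagonal π * M).transpose)
    (prob : (Fin n → Fin L × Fin L) → ℝ)
    (hprob : ∀ ω, prob ω = ∏ i, π (ω i).1 * M (ω i).1 (ω i).2)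
    (E : ((Fin n → Fin L × Fin L) → ℝ) → ℝ)
    (hE : ∀ f, E f = ∑ ω : Fin n → Fin L × Fin L, prob ω * f ω)
    (Var : ((Fin n → Fin L × Fin L) → ℝ) → ℝ)
    (hVar : ∀ f, Var f = E (fun ω => (f ω - E f) ^ 2))
    (Z : Fin (n - k + 1) → (Fin k → Fin L) → (Fin n → Fin L × Fin L) → ℝ)
    (hZ : ∀ m W ω, Z m W ω =
      (if ∀ j : Fin k, (ω ⟨m.1 + j.1, by have := m.2; have := j.2; omega⟩).1 = W j
        then 1 else 0)
      - (if ∀ j : Fin k, (ω ⟨m.1 + j.1, by have := m.2; have := j.2; omega⟩).2 = W j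
        then 1 else 0))
    (i : Fin (n - k + 1)) (W : Fin k → Fin L) :
    Var (Z i W) = E (fun ω => (Z i W ω) ^ 2)
    ∧ E (fun ω => (Z i W ω) ^ 2)
        = (∏ j, π (W j)) * (2 - ∏ j, M (W j) (W j) - ∏ j, N (W j) (W j)) := by
  classical
  -- total mass of a single site
  have hmass : ∑ x : Fin L × Fin L, π x.1 * M x.1 x.2 = 1 := by
    rw [Fintype.sum_prod_type]
    calc ∑ w, ∑ u, π w * M w u = ∑ w, π w * ∑ u, M w u := by
          apply Finset.sum_congr rfl; intro w _; rw [Finset.mul_sum]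
      _ = ∑ w, π w := by
          apply Finset.sum_congr rfl; intro w _; rw [hM1 w, mul_one]
      _ = 1 := hπ1
  -- position map
  set pos : Fin k → Fin n :=
    fun j => ⟨i.1 + j.1, by have := i.2; have := j.2; omega⟩ with hpos
  -- the three window functions
  set GA : Fin k → Fin L × Fin L → ℝ :=
    fun j x => if x.1 = W j then 1 else 0 with hGA
  set GB : Fin k → Fin L × Fin L → ℝ :=
    fun j x => if x.2 = W j then 1 else 0 with hGB
  set GAB : Fin k → Fin L × Fin L → ℝ :=
    fun j x => (if x.1 = W j then (1:ℝ) else 0) * (if x.2 = W j then 1 else 0)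
    with hGAB
  -- the per-letter sums
  have sA : ∀ j, ∑ x : Fin L × Fin L, π x.1 * M x.1 x.2 * GA j x = π (W j) := by
    intro j
    rw [Fintype.sum_prod_type]
    simp only [hGA]
    calc ∑ w, ∑ u, π w * M w u * (if w = W j then (1:ℝ) else 0)
        = ∑ w, (if w = W j then (π w * ∑ u, M w u) else 0) := by
          apply Finset.sum_congr rfl; intro w _
          split_ifs with h
          · rw [Finset.mul_sum]; apply Finset.sum_congr rfl; intro u _; ring
          · simp
      _ = π (W j) * ∑ u, M (W j) u := by rw [Finset.sum_ite_eq' Finset.univ (W j)]; simp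
      _ = π (W j) := by rw [hM1, mul_one]
  have sB : ∀ j, ∑ x : Fin L × Fin L, π x.1 * M x.1 x.2 * GB j x = π (W j) := by
    intro j
    rw [Fintype.sum_prod_type]
    simp only [hGB]
    calc ∑ w, ∑ u, π w * M w u * (if u = W j then (1:ℝ) else 0)
        = ∑ w, π w * M w (W j) := by
          apply Finset.sum_congr rfl; intro w _
          calc ∑ u, π w * M w u * (if u = W j then (1:ℝ) else 0)
              = ∑ u, (if u = W j then π w * M w u else 0) := by
                apply Finset.sum_congr rfl; intro u _; split_ifs <;> simp
            _ = π w * M w (W j) := by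
                rw [Finset.sum_ite_eq' Finset.univ (W j)]; simp
      _ = π (W j) := hstat (W j)
  have sAB : ∀ j, ∑ x : Fin L × Fin L, π x.1 * M x.1 x.2 * GAB j x
      = π (W j) * M (W j) (W j) := by
    intro j
    rw [Fintype.sum_prod_type]
    simp only [hGAB]
    calc ∑ w, ∑ u, π w * M w u *
          ((if w = W j then (1:ℝ) else 0) * (if u = W j then 1 else 0))
        = ∑ w, (if w = W j then (π w * M w (W j)) else 0) := by
          apply Finset.sum_congr rfl; intro w _
          split_ifs with h
          · calc ∑ u, π w * M w u * ((1:ℝ) * if u = W j then (1:ℝ) else 0)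
                = ∑ u, (if u = W j then π w * M w u else 0) := by
                  apply Finset.sum_congr rfl; intro u _; split_ifs <;> simp
              _ = π w * M w (W j) := by
                  rw [Finset.sum_ite_eq' Finset.univ (W j)]; simp
          · simp
      _ = π (W j) * M (W j) (W j) := by
          rw [Finset.sum_ite_eq' Finset.univ (W j)]; simp
  -- rewrite Z pointwise via pos and products of booleans
  have hZ' : ∀ ω, Z i W ω
      = (∏ j, GA j (ω (pos j))) - ∏ j, GB j (ω (pos j)) := by
    intro ω
    rw [hZ i W ω]
    simp only [hGA, hGB, hpos, Fintype.prod_boole]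
    congr!
  -- three expectations
  have EA : ∑ ω : Fin n → Fin L × Fin L, prob ω * ∏ j, GA j (ω (pos j)) = ∏ j, π (W j) := by
    calc ∑ ω : Fin n → Fin L × Fin L, prob ω * ∏ j, GA j (ω (pos j))
        = ∑ ω : Fin n → Fin L × Fin L, (∏ m, π (ω m).1 * M (ω m).1 (ω m).2)
            * ∏ j, GA j (ω (pos j)) := by
          apply Finset.sum_congr rfl; intro ω _; rw [hprob]
      _ = ∏ j, ∑ x : Fin L × Fin L, π x.1 * M x.1 x.2 * GA j x :=
          kmer_expect hkn i π M hmass GA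
      _ = ∏ j, π (W j) := Finset.prod_congr rfl fun j _ => sA j
  have EB : ∑ ω : Fin n → Fin L × Fin L, prob ω * ∏ j, GB j (ω (pos j)) = ∏ j, π (W j) := by
    calc ∑ ω : Fin n → Fin L × Fin L, prob ω * ∏ j, GB j (ω (pos j))
        = ∑ ω : Fin n → Fin L × Fin L, (∏ m, π (ω m).1 * M (ω m).1 (ω m).2)
            * ∏ j, GB j (ω (pos j)) := by
          apply Finset.sum_congr rfl; intro ω _; rw [hprob]
      _ = ∏ j, ∑ x : Fin L × Fin L, π x.1 * M x.1 x.2 * GB j x :=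
          kmer_expect hkn i π M hmass GB
      _ = ∏ j, π (W j) := Finset.prod_congr rfl fun j _ => sB j
  have EAB : ∑ ω : Fin n → Fin L × Fin L, prob ω * ∏ j, GAB j (ω (pos j))
      = ∏ j, π (W j) * M (W j) (W j) := by
    calc ∑ ω : Fin n → Fin L × Fin L, prob ω * ∏ j, GAB j (ω (pos j))
        = ∑ ω : Fin n → Fin L × Fin L, (∏ m, π (ω m).1 * M (ω m).1 (ω m).2)
            * ∏ j, GAB j (ω (pos j)) := by
          apply Finset.sum_congr rfl; intro ω _; rw [hprob]
      _ = ∏ j, ∑ x : Fin L × Fin L, π x.1 * M x.1 x.2 * GAB j x :=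
          kmer_expect hkn i π M hmass GAB
      _ = ∏ j, π (W j) * M (W j) (W j) := Finset.prod_congr rfl fun j _ => sAB j
  -- Boolean products and arithmetic of indicators
  have hbool : ∀ ω : Fin n → Fin L × Fin L, (∏ j, GA j (ω (pos j))) = 0 ∨ (∏ j, GA j (ω (pos j))) = 1 := by
    intro ω
    simp only [hGA, Fintype.prod_boole]
    split_ifs <;> simp
  have hboolB : ∀ ω : Fin n → Fin L × Fin L, (∏ j, GB j (ω (pos j))) = 0 ∨ (∏ j, GB j (ω (pos j))) = 1 := by
    intro ω
    simp only [hGB, Fintype.prod_boole]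
    split_ifs <;> simp
  have hprodAB : ∀ ω : Fin n → Fin L × Fin L, (∏ j, GA j (ω (pos j))) * (∏ j, GB j (ω (pos j)))
      = ∏ j, GAB j (ω (pos j)) := by
    intro ω
    rw [← Finset.prod_mul_distrib]
  -- E[Z] = 0
  have hEZ : E (Z i W) = 0 := by
    rw [hE]
    calc ∑ ω : Fin n → Fin L × Fin L, prob ω * Z i W ω
        = ∑ ω, (prob ω * ∏ j, GA j (ω (pos j))
            - prob ω * ∏ j, GB j (ω (pos j))) := by
          apply Finset.sum_congr rfl; intro ω _; rw [hZ' ω]; ring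
      _ = (∑ ω : Fin n → Fin L × Fin L, prob ω * ∏ j, GA j (ω (pos j)))
            - ∑ ω : Fin n → Fin L × Fin L, prob ω * ∏ j, GB j (ω (pos j)) := Finset.sum_sub_distrib _ _
      _ = 0 := by rw [EA, EB]; ring
  -- E[Z²]
  have hEZ2 : E (fun ω => (Z i W ω) ^ 2)
      = (∏ j, π (W j)) + (∏ j, π (W j))
        - 2 * ∏ j, π (W j) * M (W j) (W j) := by
    rw [hE]
    calc ∑ ω : Fin n → Fin L × Fin L, prob ω * (Z i W ω) ^ 2
        = ∑ ω, (prob ω * ∏ j, GA j (ω (pos j))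
            + prob ω * ∏ j, GB j (ω (pos j))
            - 2 * (prob ω * ∏ j, GAB j (ω (pos j)))) := by
          apply Finset.sum_congr rfl; intro ω _
          rw [hZ' ω, ← hprodAB ω]
          rcases hbool ω with h | h <;> rcases hboolB ω with h' | h' <;>
            rw [h, h'] <;> ring
      _ = ((∑ ω : Fin n → Fin L × Fin L, prob ω * ∏ j, GA j (ω (pos j)))
            + ∑ ω : Fin n → Fin L × Fin L, prob ω * ∏ j, GB j (ω (pos j)))
            - ∑ ω : Fin n → Fin L × Fin L, 2 * (prob ω * ∏ j, GAB j (ω (pos j))) := by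
          rw [Finset.sum_sub_distrib, Finset.sum_add_distrib]
      _ = ((∏ j, π (W j)) + ∏ j, π (W j))
            - 2 * ∏ j, π (W j) * M (W j) (W j) := by
          rw [← Finset.mul_sum, EA, EB, EAB]
      _ = _ := by ring
  -- N has the same diagonal as M
  have hinv : (Matrix.diagonal π)⁻¹ = Matrix.diagonal (fun w => (π w)⁻¹) := by
    apply Matrix.inv_eq_left_inv
    rw [Matrix.diagonal_mul_diagonal]
    have h1 : (fun w => (π w)⁻¹ * π w) = fun _ => (1:ℝ) := by
      funext w; exact inv_mul_cancel₀ (hπ0 w).ne'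
    rw [h1, Matrix.diagonal_one]
  have hNd : ∀ w, N w w = M w w := by
    intro w
    rw [hN, hinv]
    rw [Matrix.diagonal_mul]
    simp only [Matrix.transpose_apply, Matrix.mul_apply, Matrix.diagonal_apply]
    rw [Finset.sum_eq_single w]
    · simp only [if_pos rfl]
      field_simp
      exact mul_div_cancel_left₀ _ (hπ0 w).ne'
    · intro b _ hb
      simp [hb.symm]
    · intro h; exact absurd (Finset.mem_univ w) h
  have hNprod : (∏ j, N (W j) (W j)) = ∏ j, M (W j) (W j) :=
    Finset.prod_congr rfl fun j _ => hNd (W j)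
  constructor
  · rw [hVar, hEZ]
    congr 1
    funext ω
    ring
  · rw [hEZ2, ← hNprod, Finset.prod_mul_distrib, hNprod]
    ring
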